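/- Let Λ be a finite-dimensional selfinjective algebra, Q a finite acyclic quiver, and α, β arrows of Q such that there is no path from t(α) to s(β) and no path from t(β) to s(α). Then for any ΛQ-module M there is an isomorphism Mono_α(Mono_β(M)) ≅ Mono_β(Mono_α(M)). -/

import Mathlib

open Function LinearMap

/-- A representation of the quiver with vertex set `V` and arrow family `E`
over the ring `Λ`: a `Λ`-module at every vertex and a linear map along every arrow. -/
structure QRep (Λ : Type) [Ring Λ] {V : Type} (E : V → V → Type) : Type 1 where
  obj : V → Type
  [acg : ∀ i, AddCommGroup (obj i)]
  [mod : ∀ i, Module Λ (obj i)]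
  map : ∀ {i j : V}, E i j → (obj i →ₗ[Λ] obj j)

attribute [instance] QRep.acg QRep.mod

namespace QRep

variable {Λ : Type} [Ring Λ] {V : Type} {E : V → V → Type}

/-- Morphisms of representations. -/
@[ext]
structure Hom (X Y : QRep Λ E) where
  app : ∀ i, X.obj i →ₗ[Λ] Y.obj i
  comm : ∀ {i j : V} (a : E i j), (Y.map a).comp (app i) = (app j).comp (X.map a)

def Hom.id (X : QRep Λ E) : Hom X X :=
  ⟨fun _ => LinearMap.id, fun _ => by ext; rfl⟩

def Hom.comp {X Y Z : QRep Λ E} (g : Hom Y Z) (f : Hom X Y) : Hom X Z :=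
  ⟨fun i => (g.app i).comp (f.app i), fun {i j} a => by
    ext x
    have h1 := LinearMap.congr_fun (f.comm a) x
    have h2 := LinearMap.congr_fun (g.comm a) (f.app i x)
    simp only [LinearMap.comp_apply] at h1 h2 ⊢
    rw [h2, h1]⟩

def Hom.sub {X Y : QRep Λ E} (f g : Hom X Y) : Hom X Y :=
  ⟨fun i => f.app i - g.app i, fun {i j} a => by
    ext x
    have h1 := LinearMap.congr_fun (f.comm a) x
    have h2 := LinearMap.congr_fun (g.comm a) x
    simp only [LinearMap.comp_apply, LinearMap.sub_apply, map_sub] at h1 h2 ⊢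
    rw [h1, h2]⟩

/-- Two representations are isomorphic. -/
def Iso (X Y : QRep Λ E) : Prop :=
  ∃ f : Hom X Y, ∀ i, Function.Bijective (f.app i)

/-- The assembled map `⊕_{a : j → i} X_j → X_i` at a vertex `i`. -/
noncomputable def uMap (X : QRep Λ E) (i : V) :
    (DirectSum (Σ j : V, E j i) (fun a => X.obj a.1)) →ₗ[Λ] X.obj i := by
  classical exact DirectSum.toModule Λ _ _ (fun a => X.map a.2)

/-- A representation is separated monic if at every vertex the assembled map
from the direct sum of the incoming branches is injective. -/
def SeparatedMonic (X : QRep Λ E) : Prop :=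
  ∀ i : V, Function.Injective (X.uMap i)

/-- Paths in the quiver given by the arrow family `E`. -/
def Path (E : V → V → Type) (i j : V) : Type := @Quiver.Path V ⟨E⟩ i j

/-- The quiver is acyclic: no nontrivial oriented cycles. -/
def Acyclic (E : V → V → Type) : Prop :=
  ∀ i : V, ∀ p : Path E i i, p = @Quiver.Path.nil V ⟨E⟩ i

/-- The representation `P_n(A) = A ⊗ P(n)`: at vertex `i` a copy of `A` for every
path from `n` to `i`. -/
noncomputable def Pn (Λ : Type) [Ring Λ] (E : V → V → Type) (n : V) (A : Type)
    [AddCommGroup A] [Module Λ A] : QRep Λ E where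
  obj i := Path E n i →₀ A
  map {i j} a := Finsupp.lmapDomain A Λ (fun p => @Quiver.Path.cons V ⟨E⟩ n i j p a)

/-- Projectivity of a representation, via the lifting property against
componentwise surjections of representations. -/
def Projective (P : QRep Λ E) : Prop :=
  ∀ (X Y : QRep Λ E) (g : Hom X Y), (∀ i, Function.Surjective (g.app i)) →
    ∀ f : Hom P Y, ∃ f' : Hom P X, g.comp f' = f

/-- A module has no nonzero projective direct summand. -/
def NoProjSummand (Λ : Type) [Ring Λ] (M : Type) [AddCommGroup M] [Module Λ M] : Prop :=
  ∀ (P C : Type) [AddCommGroup P] [Module Λ P] [AddCommGroup C] [Module Λ C],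
    Module.Projective Λ P → Nonempty (M ≃ₗ[Λ] P × C) → Subsingleton P

/-- A module has no nonzero injective direct summand. -/
def NoInjSummand (Λ : Type) [Ring Λ] (M : Type) [AddCommGroup M] [Module Λ M] : Prop :=
  ∀ (P C : Type) [AddCommGroup P] [Module Λ P] [AddCommGroup C] [Module Λ C],
    Module.Injective Λ P → Nonempty (M ≃ₗ[Λ] P × C) → Subsingleton P

/-- A linear map factors through an injective module. -/
def FactorsThroughInjective (Λ : Type) [Ring Λ] {A B : Type}
    [AddCommGroup A] [Module Λ A] [AddCommGroup B] [Module Λ B] (f : A →ₗ[Λ] B) : Prop :=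
  ∃ (J : Type) (_ : AddCommGroup J) (_ : Module Λ J), Module.Injective Λ J ∧
    ∃ (g : A →ₗ[Λ] J) (h : J →ₗ[Λ] B), f = h.comp g

/-- A morphism of representations factors through a projective representation. -/
def FactorsThroughProjective {X Y : QRep Λ E} (f : Hom X Y) : Prop :=
  ∃ (P : QRep Λ E), Projective P ∧ SeparatedMonic P ∧
    ∃ (u : Hom X P) (v : Hom P Y), f = v.comp u

/-- Stable isomorphism: isomorphism in the stable category of Gorenstein-projective
representations modulo projectives. -/
def StIso (X Y : QRep Λ E) : Prop :=
  ∃ (f : Hom X Y) (g : Hom Y X),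
    FactorsThroughProjective ((g.comp f).sub (Hom.id X)) ∧
    FactorsThroughProjective ((f.comp g).sub (Hom.id Y))

/-- `e : M →ₗ J` is an injective envelope: `J` is injective, `e` is injective and
its image is essential in `J`. -/
def IsInjEnvelope {M J : Type} [AddCommGroup M] [Module Λ M] [AddCommGroup J]
    [Module Λ J] (e : M →ₗ[Λ] J) : Prop :=
  Module.Injective Λ J ∧ Function.Injective e ∧
    ∀ W : Submodule Λ J, Disjoint W (LinearMap.range e) → W = ⊥

end QRep
section MonoACons

variable {Λ : Type} [Ring Λ] {V : Type} {E : V → V → Type}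

open QRep

namespace QRep

open Classical in
/-- The map `E_β` in the `Mono_α` construction: it is `single nil ∘ e` when `β = α`
and zero otherwise. -/
noncomputable def EMap (M : QRep Λ E) {v w : V} (α : E v w) {J : Type} [AddCommGroup J]
    [Module Λ J] (e : M.obj v →ₗ[Λ] J) {i j : V} (β : E i j) :
    M.obj i →ₗ[Λ] (Path E w j →₀ J) :=
  if h : (⟨i, ⟨j, β⟩⟩ : Σ a : V, Σ b : V, E a b) = ⟨v, ⟨w, α⟩⟩ then by
    obtain ⟨h1, h2⟩ := Sigma.mk.inj_iff.mp h
    subst h1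
    obtain ⟨h3, _⟩ := Sigma.mk.inj_iff.mp (eq_of_heq h2)
    subst h3
    exact (Finsupp.lsingle (R := Λ) (M := J) (@Quiver.Path.nil V ⟨E⟩ _)).comp e
  else 0

/-- The construction `Mono_α(M)`: the middle term of the componentwise split short
exact sequence `0 → P_w(J) → Mono_α(M) → M → 0` twisted by `e` at the arrow `α`. -/
noncomputable def MonoA (M : QRep Λ E) {v w : V} (α : E v w) {J : Type} [AddCommGroup J]
    [Module Λ J] (e : M.obj v →ₗ[Λ] J) : QRep Λ E where
  obj i := M.obj i × (Path E w i →₀ J)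
  map {i j} β := LinearMap.prod
    ((M.map β).comp (LinearMap.fst Λ _ _))
    ((Finsupp.lmapDomain J Λ (fun p => @Quiver.Path.cons V ⟨E⟩ w i j p β)).comp
        (LinearMap.snd Λ _ _)
      + (EMap M α e β).comp (LinearMap.fst Λ _ _))

/-- The canonical projection `Mono_α(M) → M`. -/
noncomputable def MonoAProj (M : QRep Λ E) {v w : V} (α : E v w) {J : Type} [AddCommGroup J]
    [Module Λ J] (e : M.obj v →ₗ[Λ] J) : Hom (MonoA M α e) M :=
  ⟨fun _ => LinearMap.fst Λ _ _, fun {i j} β => by ext x; rfl⟩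

/-- `IsMonoIter L M N π` holds when `N`, together with the projection `π : N → M`,
is obtained from `M` by successively applying the `Mono` construction at the arrows in
the list `L` (the head of `L` applied last), each time using an injective envelope. -/
inductive IsMonoIter : ∀ (L : List (Σ i : V, Σ j : V, E i j)) (M N : QRep Λ E), Hom N M → Prop
  | nil (M : QRep Λ E) : IsMonoIter [] M M (Hom.id M)
  | cons {L : List (Σ i : V, Σ j : V, E i j)} {M N : QRep Λ E} {π : Hom N M} {v w : V}
      (α : E v w) {J : Type} [AddCommGroup J] [Module Λ J] (e : N.obj v →ₗ[Λ] J)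
      (henv : IsInjEnvelope e) (h : IsMonoIter L M N π) :
      IsMonoIter (⟨v, ⟨w, α⟩⟩ :: L) M (MonoA N α e) (π.comp (MonoAProj N α e))

/-- `π : G → M` is a right approximation of `M` in the category of
Gorenstein-projective (= separated monic) representations. -/
def IsRightApprox {G M : QRep Λ E} (π : Hom G M) : Prop :=
  SeparatedMonic G ∧
    ∀ G' : QRep Λ E, SeparatedMonic G' → ∀ f : Hom G' M, ∃ g : Hom G' G, π.comp g = f

/-- `π : A → M` is the minimal right approximation of `M` in Gproj. -/
def IsMimo {M A : QRep Λ E} (π : Hom A M) : Prop :=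
  IsRightApprox π ∧ ∀ φ : Hom A A, π.comp φ = π → ∀ i, Function.Bijective (φ.app i)

end QRep
end MonoACons
namespace QRep

variable {Λ : Type} [Ring Λ] {V : Type} {E : V → V → Type}

/-- The reflected quiver `Q(v)`: every arrow ending at `v` is reversed. An arrow
`i → j` of `Q(v)` is either an arrow `i → j` of `Q` with `j ≠ v`, or the reversal
of an arrow `j → v` of `Q` (in which case `i = v`). -/
def reflE (E : V → V → Type) (v : V) : V → V → Type :=
  fun i j => {a : E i j // j ≠ v} ⊕ (PLift (i = v) × E j v)

/-- The representation `X'(v)` of the reflected quiver: the branch at `v` is replaced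
by `Ω`, the structure maps at the reversed arrows being the components of `kmap`. -/
noncomputable def reflRep (X : QRep Λ E) (v : V) (hsink : ∀ j, IsEmpty (E v j))
    (Ω : Type) [AddCommGroup Ω] [Module Λ Ω]
    (kmap : Ω →ₗ[Λ] DirectSum (Σ j : V, E j v) (fun a => X.obj a.1)) :
    QRep Λ (reflE E v) where
  obj i := (PLift (i = v) → Ω) × (PLift (i ≠ v) → X.obj i)
  map {i j} a :=
    match a with
    | Sum.inl ⟨a, _⟩ => LinearMap.prod 0
        (LinearMap.pi fun _ : PLift (j ≠ v) =>
          (X.map a).comp ((LinearMap.proj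
            (⟨fun h => (hsink j).false (h ▸ a)⟩ : PLift (i ≠ v))).comp
              (LinearMap.snd Λ _ _)))
    | Sum.inr ⟨hiv, a⟩ => LinearMap.prod 0
        (LinearMap.pi fun _ : PLift (j ≠ v) =>
          (((DirectSum.component Λ (Σ j : V, E j v) (fun b => X.obj b.1) ⟨j, a⟩).comp
              kmap).comp ((LinearMap.proj hiv).comp (LinearMap.fst Λ _ _))))

/-- The reflection relation: `Z` is (the result of) the reflection `X(v)` of the
Gorenstein-projective representation `X` at the sink `v`; it is obtained from the
representation `X'(v)` (defined via a projective cover `δ : C → coker u_X` with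
kernel `Ω` and the lifted kernel map `kmap`) by the `Mono` construction at all
reversed arrows. -/
def IsReflectionAt (X : QRep Λ E) (v : V) (hsink : ∀ j, IsEmpty (E v j))
    (Z : QRep Λ (reflE E v)) : Prop :=
  ∃ (Xbar : Type) (_ : AddCommGroup Xbar) (_ : Module Λ Xbar) (πc : X.obj v →ₗ[Λ] Xbar)
    (C : Type) (_ : AddCommGroup C) (_ : Module Λ C) (δ : C →ₗ[Λ] Xbar)
    (kmap : ↥(LinearMap.ker δ) →ₗ[Λ] DirectSum (Σ j : V, E j v) (fun a => X.obj a.1))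
    (t : C →ₗ[Λ] X.obj v),
    Function.Surjective πc ∧ LinearMap.ker πc = LinearMap.range (X.uMap v) ∧
    Module.Projective Λ C ∧ Function.Surjective δ ∧
    (∀ W : Submodule Λ C, W ⊔ LinearMap.ker δ = ⊤ → W = ⊤) ∧
    πc.comp t = δ ∧ (X.uMap v).comp kmap = t.comp (LinearMap.ker δ).subtype ∧
    ∃ (L : List (Σ i : V, Σ j : V, reflE E v i j))
      (π : Hom Z (reflRep X v hsink (↥(LinearMap.ker δ)) kmap)),
      (∀ x ∈ L, x.1 = v) ∧ L.Nodup ∧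
      (∀ (j : V) (a : E j v),
        (⟨v, j, Sum.inr ⟨⟨rfl⟩, a⟩⟩ : Σ i : V, Σ j : V, reflE E v i j) ∈ L) ∧
      IsMonoIter L (reflRep X v hsink (↥(LinearMap.ker δ)) kmap) Z π

/-- Transport of a representation along a family of bijections of arrow types. -/
def transport {E' : V → V → Type} (σ : ∀ i j, E i j ≃ E' i j) (X : QRep Λ E) :
    QRep Λ E' where
  obj := X.obj
  map {i j} a := X.map ((σ i j).symm a)

/-- `A'` is a (representation-level) syzygy of `A` in the Frobenius category of
Gorenstein-projective representations. -/
def IsSyzRep (A' A : QRep Λ E) : Prop :=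
  ∃ (P : QRep Λ E) (ι : Hom A' P) (π : Hom P A), Projective P ∧ SeparatedMonic P ∧
    (∀ i, Function.Injective (ι.app i)) ∧ (∀ i, Function.Surjective (π.app i)) ∧
    (∀ i, LinearMap.range (ι.app i) = LinearMap.ker (π.app i))

/-- `C` is a double syzygy `Ω²(A)`. -/
def IsOmega2 (A C : QRep Λ E) : Prop :=
  ∃ A', IsSyzRep A' A ∧ IsSyzRep C A'

end QRep

open CategoryTheory

/-- The category of Gorenstein-projective (= separated monic) representations. -/
def GP (Λ : Type) [Ring Λ] {V : Type} (E : V → V → Type) : Type 1 :=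
  {X : QRep Λ E // QRep.SeparatedMonic X}

instance (Λ : Type) [Ring Λ] {V : Type} (E : V → V → Type) :
    Category (GP Λ E) where
  Hom X Y := QRep.Hom X.1 Y.1
  id X := QRep.Hom.id X.1
  comp f g := g.comp f
  id_comp f := by apply QRep.Hom.ext; funext i; exact LinearMap.comp_id _
  comp_id f := by apply QRep.Hom.ext; funext i; exact LinearMap.id_comp _
  assoc f g h := by apply QRep.Hom.ext; funext i; rfl

/-- The relation identifying two morphisms whose difference factors through a
projective object. -/
def stRel (Λ : Type) [Ring Λ] {V : Type} (E : V → V → Type) : HomRel (GP Λ E) :=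
  fun {X Y} f g => QRep.FactorsThroughProjective (f.sub g)

/-- The stable category of Gorenstein-projective representations modulo projectives. -/
def StableGP (Λ : Type) [Ring Λ] {V : Type} (E : V → V → Type) : Type 1 :=
  CategoryTheory.Quotient (stRel Λ E)

noncomputable instance (Λ : Type) [Ring Λ] {V : Type} (E : V → V → Type) :
    Category (StableGP Λ E) :=
  inferInstanceAs (Category (CategoryTheory.Quotient (stRel Λ E)))

section AuxLemmas
variable {Λ : Type} [Ring Λ] {V : Type} {E : V → V → Type}

lemma EMap_eq_same (M : QRep Λ E) {v w : V} (α : E v w)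
    {J : Type} [AddCommGroup J] [Module Λ J] (e : M.obj v →ₗ[Λ] J) :
    QRep.EMap M α e α =
      (Finsupp.lsingle (R := Λ) (M := J) (α := QRep.Path E w w)
        (@Quiver.Path.nil V ⟨E⟩ w)).comp e := by
  unfold QRep.EMap
  rw [dif_pos rfl]
  generalize_proofs g1 g2 g3 g4
  rw [Subsingleton.elim g1 ⟨rfl, HEq.rfl⟩]
  conv_lhs => whnf
  rw [Subsingleton.elim (g2 α HEq.rfl) ⟨rfl, HEq.rfl⟩]
  rfl

lemma EMap_eq_ne (M : QRep Λ E) {v w : V} (α : E v w)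
    {J : Type} [AddCommGroup J] [Module Λ J] (e : M.obj v →ₗ[Λ] J)
    {i j : V} (γ : E i j)
    (hne : (⟨i, ⟨j, γ⟩⟩ : Σ a : V, Σ b : V, E a b) ≠ ⟨v, ⟨w, α⟩⟩) :
    QRep.EMap M α e γ = 0 := by
  unfold QRep.EMap
  rw [dif_neg hne]

end AuxLemmas

section AuxEnv
variable {Λ : Type} [Ring Λ]

lemma isInjEnvelope_comp_bijective {M M' J : Type} [AddCommGroup M] [Module Λ M]
    [AddCommGroup M'] [Module Λ M'] [AddCommGroup J] [Module Λ J]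
    {e : M →ₗ[Λ] J} (he : QRep.IsInjEnvelope e) {σ : M' →ₗ[Λ] M}
    (hσ : Function.Bijective σ) : QRep.IsInjEnvelope (e.comp σ) := by
  obtain ⟨h1, h2, h3⟩ := he
  refine ⟨h1, h2.comp hσ.1, fun W hW => h3 W ?_⟩
  rwa [LinearMap.range_comp, LinearMap.range_eq_top.mpr hσ.2, Submodule.map_top] at hW

lemma envIso {M J J' : Type} [AddCommGroup M] [Module Λ M] [AddCommGroup J] [Module Λ J]
    [AddCommGroup J'] [Module Λ J'] {e : M →ₗ[Λ] J} {e' : M →ₗ[Λ] J'}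
    (he : QRep.IsInjEnvelope e) (he' : QRep.IsInjEnvelope e') :
    ∃ φ : J ≃ₗ[Λ] J', ∀ m, φ (e m) = e' m := by
  obtain ⟨hJ, heinj, hess⟩ := he
  obtain ⟨hJ', he'inj, hess'⟩ := he'
  obtain ⟨h, hh⟩ := hJ'.out e heinj e'
  have hinj : Function.Injective h := by
    rw [← LinearMap.ker_eq_bot]
    refine hess _ ?_
    rw [disjoint_iff, eq_bot_iff]
    intro x hx
    obtain ⟨hx1, hx2⟩ := Submodule.mem_inf.mp hx
    obtain ⟨m, rfl⟩ := hx2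
    have hm : e' m = 0 := by rw [← hh]; exact hx1
    have : m = 0 := he'inj (by rw [hm, map_zero])
    simp [this]
  obtain ⟨r, hr⟩ := hJ.out h hinj LinearMap.id
  have hr' : ∀ x, r (h x) = x := hr
  have rsurj : Function.Surjective r := fun x => ⟨h x, hr' x⟩
  have rinj : Function.Injective r := by
    rw [← LinearMap.ker_eq_bot]
    refine hess' _ ?_
    rw [disjoint_iff, eq_bot_iff]
    intro x hx
    obtain ⟨hx1, hx2⟩ := Submodule.mem_inf.mp hx
    obtain ⟨m, rfl⟩ := hx2
    have h1 : e' m = h (e m) := (hh m).symm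
    have h2 : r (e' m) = e m := by rw [h1, hr']
    have h3 : e m = 0 := by rw [← h2]; exact hx1
    have : m = 0 := heinj (by rw [h3, map_zero])
    simp [this]
  refine ⟨(LinearEquiv.ofBijective r ⟨rinj, rsurj⟩).symm, fun m => ?_⟩
  rw [LinearEquiv.symm_apply_eq]
  show e m = r (e' m)
  rw [← hh, hr']

end AuxEnv

/-- If there is no path from `t(α)` to `s(β)` and no path from
`t(β)` to `s(α)`, then `Mono_α(Mono_β(M)) ≅ Mono_β(Mono_α(M))` (for any choices of
injective envelopes in the constructions). -/
theorem monoA_monoA_comm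
    (k : Type) [Field k] (Λ : Type) [Ring Λ] [Algebra k Λ] [FiniteDimensional k Λ]
    (hself : Module.Injective Λ Λ)
    {V : Type} [Fintype V] {E : V → V → Type} [∀ i j, Fintype (E i j)]
    (hacyc : QRep.Acyclic E)
    (M : QRep Λ E) (hfin : ∀ i, Module.Finite Λ (M.obj i))
    {a₁ a₂ b₁ b₂ : V} (α : E a₁ a₂) (β : E b₁ b₂)
    (hpath₁ : IsEmpty (QRep.Path E a₂ b₁)) (hpath₂ : IsEmpty (QRep.Path E b₂ a₁))
    (J₁ : Type) [AddCommGroup J₁] [Module Λ J₁] (e₁ : M.obj b₁ →ₗ[Λ] J₁)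
    (he₁ : QRep.IsInjEnvelope e₁)
    (J₂ : Type) [AddCommGroup J₂] [Module Λ J₂]
    (e₂ : (QRep.MonoA M β e₁).obj a₁ →ₗ[Λ] J₂) (he₂ : QRep.IsInjEnvelope e₂)
    (J₃ : Type) [AddCommGroup J₃] [Module Λ J₃] (e₃ : M.obj a₁ →ₗ[Λ] J₃)
    (he₃ : QRep.IsInjEnvelope e₃)
    (J₄ : Type) [AddCommGroup J₄] [Module Λ J₄]
    (e₄ : (QRep.MonoA M α e₃).obj b₁ →ₗ[Λ] J₄) (he₄ : QRep.IsInjEnvelope e₄) :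
    QRep.Iso (QRep.MonoA (QRep.MonoA M β e₁) α e₂)
      (QRep.MonoA (QRep.MonoA M α e₃) β e₄) := by
  classical
  -- finsupps over empty path types vanish
  have hz1 : ∀ f : QRep.Path E b₂ a₁ →₀ J₁, f = 0 :=
    fun f => Finsupp.ext fun p => (hpath₂.false p).elim
  have hz2 : ∀ g : QRep.Path E a₂ b₁ →₀ J₂, g = 0 :=
    fun g => Finsupp.ext fun p => (hpath₁.false p).elim
  have hz3 : ∀ h : QRep.Path E a₂ b₁ →₀ J₃, h = 0 :=
    fun h => Finsupp.ext fun p => (hpath₁.false p).elim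
  -- the inclusions m ↦ (m, 0) are bijective
  have hσ₂ : Function.Bijective
      (LinearMap.prod LinearMap.id (0 : M.obj a₁ →ₗ[Λ] (QRep.Path E b₂ a₁ →₀ J₁))) := by
    constructor
    · intro x y hxy
      simpa using congrArg Prod.fst hxy
    · rintro ⟨m, f⟩
      exact ⟨m, by simp [hz1 f]⟩
  have hσ₄ : Function.Bijective
      (LinearMap.prod LinearMap.id (0 : M.obj b₁ →ₗ[Λ] (QRep.Path E a₂ b₁ →₀ J₃))) := by
    constructor
    · intro x y hxy
      simpa using congrArg Prod.fst hxy
    · rintro ⟨m, f⟩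
      exact ⟨m, by simp [hz3 f]⟩
  -- compare the injective envelopes
  obtain ⟨φ, hφ⟩ := envIso (isInjEnvelope_comp_bijective he₂ hσ₂) he₃
  obtain ⟨ψ, hψ⟩ := envIso he₁ (isInjEnvelope_comp_bijective he₄ hσ₄)
  have hφ' : ∀ m : M.obj a₁, φ (e₂ (m, 0)) = e₃ m := by
    intro m
    have := hφ m
    exact this
  have hψ' : ∀ m : M.obj b₁, ψ (e₁ m) = e₄ (m, 0) := by
    intro m
    have := hψ m
    exact this
  -- the component maps of the isomorphism
  set T : ∀ i : V,
      ((M.obj i × (QRep.Path E b₂ i →₀ J₁)) × (QRep.Path E a₂ i →₀ J₂)) →ₗ[Λ]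
      ((M.obj i × (QRep.Path E a₂ i →₀ J₃)) × (QRep.Path E b₂ i →₀ J₄)) :=
    fun i => LinearMap.prod
      (LinearMap.prod ((LinearMap.fst Λ _ _).comp (LinearMap.fst Λ _ _))
        ((Finsupp.mapRange.linearMap φ.toLinearMap).comp (LinearMap.snd Λ _ _)))
      ((Finsupp.mapRange.linearMap ψ.toLinearMap).comp
        ((LinearMap.snd Λ _ _).comp (LinearMap.fst Λ _ _))) with hT
  -- key identities for the twisting maps
  have Eq1 : ∀ {i j : V} (γ : E i j) (m : M.obj i) (f : QRep.Path E b₂ i →₀ J₁),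
      Finsupp.mapRange.linearMap φ.toLinearMap
        (QRep.EMap (QRep.MonoA M β e₁) α e₂ γ (m, f)) = QRep.EMap M α e₃ γ m := by
    intro i j γ m f
    by_cases hb : (⟨i, ⟨j, γ⟩⟩ : Σ a : V, Σ b : V, E a b) = ⟨a₁, ⟨a₂, α⟩⟩
    · obtain ⟨rfl, h2⟩ := Sigma.mk.inj_iff.mp hb
      obtain ⟨rfl, h3⟩ := Sigma.mk.inj_iff.mp (eq_of_heq h2)
      obtain rfl := eq_of_heq h3
      rw [EMap_eq_same, EMap_eq_same, hz1 f]
      simp only [LinearMap.comp_apply, Finsupp.lsingle_apply,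
        Finsupp.mapRange.linearMap_apply, Finsupp.mapRange_single, LinearEquiv.coe_coe]
      show Finsupp.mapRange φ (map_zero φ) (Finsupp.single (α := QRep.Path E j j)
        (@Quiver.Path.nil V ⟨E⟩ j) (e₂ (m, 0))) =
          Finsupp.single (α := QRep.Path E j j) (@Quiver.Path.nil V ⟨E⟩ j) (e₃ m)
      exact Finsupp.mapRange_single.trans (congrArg (Finsupp.single _) (hφ' m))
      
    · rw [EMap_eq_ne _ _ _ _ hb, EMap_eq_ne _ _ _ _ hb]
      simp
      exact Finsupp.mapRange_zero
  have Eq2 : ∀ {i j : V} (γ : E i j) (m : M.obj i) (g : QRep.Path E a₂ i →₀ J₂),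
      Finsupp.mapRange.linearMap ψ.toLinearMap (QRep.EMap M β e₁ γ m) =
        QRep.EMap (QRep.MonoA M α e₃) β e₄ γ
          (m, Finsupp.mapRange.linearMap φ.toLinearMap g) := by
    intro i j γ m g
    by_cases hb : (⟨i, ⟨j, γ⟩⟩ : Σ a : V, Σ b : V, E a b) = ⟨b₁, ⟨b₂, β⟩⟩
    · obtain ⟨rfl, h2⟩ := Sigma.mk.inj_iff.mp hb
      obtain ⟨rfl, h3⟩ := Sigma.mk.inj_iff.mp (eq_of_heq h2)
      obtain rfl := eq_of_heq h3
      rw [EMap_eq_same, EMap_eq_same,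
        hz3 (Finsupp.mapRange.linearMap (φ.toLinearMap) g)]
      simp only [LinearMap.comp_apply, Finsupp.lsingle_apply,
        Finsupp.mapRange.linearMap_apply, Finsupp.mapRange_single, LinearEquiv.coe_coe]
      show Finsupp.mapRange ψ (map_zero ψ) (Finsupp.single (α := QRep.Path E j j)
        (@Quiver.Path.nil V ⟨E⟩ j) (e₁ m)) =
          Finsupp.single (α := QRep.Path E j j) (@Quiver.Path.nil V ⟨E⟩ j) (e₄ (m, 0))
      exact Finsupp.mapRange_single.trans (congrArg (Finsupp.single _) (hψ' m))
    · rw [EMap_eq_ne _ _ _ _ hb, EMap_eq_ne _ _ _ _ hb]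
      simp
      rfl
  refine ⟨⟨fun i => T i, ?_⟩, ?_⟩
  · intro i j γ
    apply LinearMap.ext
    rintro ⟨⟨m, f⟩, g⟩
    refine Prod.ext (Prod.ext rfl ?_) ?_
    · -- J₂/J₃ slot
      show (Finsupp.lmapDomain (α := QRep.Path E a₂ i) (α' := QRep.Path E a₂ j) J₃ Λ (fun p : QRep.Path E a₂ i => (@Quiver.Path.cons V ⟨E⟩ a₂ i j p γ : QRep.Path E a₂ j)))
            ((Finsupp.mapRange.linearMap φ.toLinearMap) g) + (QRep.EMap M α e₃ γ) m =
          (Finsupp.mapRange.linearMap φ.toLinearMap)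
            ((Finsupp.lmapDomain (α := QRep.Path E a₂ i) (α' := QRep.Path E a₂ j) J₂ Λ (fun p : QRep.Path E a₂ i => (@Quiver.Path.cons V ⟨E⟩ a₂ i j p γ : QRep.Path E a₂ j))) g +
              (QRep.EMap (QRep.MonoA M β e₁) α e₂ γ) (m, f))
      simp only [map_add]
      rw [Eq1 γ m f]
      congr 1
      simp only [Finsupp.lmapDomain_apply, Finsupp.mapRange.linearMap_apply]
      exact Finsupp.mapDomain_mapRange _ _ _ _ (map_add _)
    · -- J₁/J₄ slot
      show (Finsupp.lmapDomain (α := QRep.Path E b₂ i) (α' := QRep.Path E b₂ j) J₄ Λ (fun p : QRep.Path E b₂ i => (@Quiver.Path.cons V ⟨E⟩ b₂ i j p γ : QRep.Path E b₂ j)))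
            ((Finsupp.mapRange.linearMap ψ.toLinearMap) f) +
            (QRep.EMap (QRep.MonoA M α e₃) β e₄ γ)
              (m, (Finsupp.mapRange.linearMap φ.toLinearMap) g) =
          (Finsupp.mapRange.linearMap ψ.toLinearMap)
            ((Finsupp.lmapDomain (α := QRep.Path E b₂ i) (α' := QRep.Path E b₂ j) J₁ Λ (fun p : QRep.Path E b₂ i => (@Quiver.Path.cons V ⟨E⟩ b₂ i j p γ : QRep.Path E b₂ j))) f +
              (QRep.EMap M β e₁ γ) m)
      simp only [map_add]
      rw [← Eq2 γ m g]
      congr 1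
      simp only [Finsupp.lmapDomain_apply, Finsupp.mapRange.linearMap_apply]
      exact Finsupp.mapDomain_mapRange _ _ _ _ (map_add _)
  · intro i
    refine Function.bijective_iff_has_inverse.mpr
      ⟨fun y => ((y.1.1, Finsupp.mapRange ψ.symm (map_zero _) y.2),
        Finsupp.mapRange φ.symm (map_zero _) y.1.2), ?_, ?_⟩
    · rintro ⟨⟨m, f⟩, g⟩
      refine Prod.ext (Prod.ext rfl ?_) ?_
      · exact Finsupp.ext fun p => ψ.symm_apply_apply (f p)
      · exact Finsupp.ext fun p => φ.symm_apply_apply (g p)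
    · rintro ⟨⟨m, h⟩, kk⟩
      refine Prod.ext (Prod.ext rfl ?_) ?_
      · exact Finsupp.ext fun p => φ.apply_symm_apply (h p)
      · exact Finsupp.ext fun p => ψ.apply_symm_apply (kk p)
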